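/- arXiv:2511.04056 — 5 statements merged into one kernel-verified Lean document; each statement's English description precedes it below -/
import Mathlib

section
/- Let X and Y be Banach spaces and let (A_n) be a sequence of continuous linear operators from X to Y that is collectively compact. Let A : X → Y be a continuous linear operator such that A_n x → A x in Y for every x ∈ X. Then A is a compact operator. -/
open Filter Topology Bornology

/-- the pointwise limit of a collectively compact sequence of
continuous linear operators between Banach spaces is a compact operator.
(Collective compactness: for every bounded `U ⊆ X`, the set
`{A_n u : n ∈ ℕ, u ∈ U}` has compact closure in `Y`; compactness of `A`: every
bounded set is mapped to a relatively compact set.) -/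
theorem stmt_8 {X Y : Type*}
    [NormedAddCommGroup X] [NormedSpace ℝ X] [CompleteSpace X]
    [NormedAddCommGroup Y] [NormedSpace ℝ Y] [CompleteSpace Y]
    (A : ℕ → X →L[ℝ] Y) (B : X →L[ℝ] Y)
    (hcc : ∀ U : Set X, IsBounded U → IsCompact (closure (⋃ n, A n '' U)))
    (hlim : ∀ x : X, Tendsto (fun n => A n x) atTop (𝓝 (B x))) :
    ∀ U : Set X, IsBounded U → IsCompact (closure (B '' U)) := by
  intro U hU
  have hsub : B '' U ⊆ closure (⋃ n, A n '' U) := by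
    rintro _ ⟨x, hx, rfl⟩
    exact mem_closure_of_tendsto (hlim x)
      (Filter.Eventually.of_forall fun n => Set.mem_iUnion.2 ⟨n, ⟨x, hx, rfl⟩⟩)
  exact (hcc U hU).of_isClosed_subset isClosed_closure
    (closure_minimal hsub (hcc U hU).isClosed)
end

section
/- Let X, Y, Z be Banach spaces, let {A_i : X → Y}_{i∈I} be a collectively compact family of continuous linear operators, and let L_n, L : Y → Z be continuous linear operators such that L_n y → L y in Z for every y ∈ Y. Then ‖(L_n − L) ∘ A_i‖ → 0 as n → ∞, uniformly in i ∈ I; that is, for every ε > 0 there exists N such that for all n ≥ N and all i ∈ I the operator norm of (L_n − L) ∘ A_i is less than ε. -/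
open Filter Topology Bornology

/-- if `{A_i : X → Y}_{i ∈ I}` is a collectively compact family of
continuous linear operators and `L_n → L` pointwise (as operators `Y → Z`),
then `‖(L_n - L) ∘ A_i‖ → 0` uniformly in `i ∈ I`. -/
theorem stmt_9 {X Y Z : Type*}
    [NormedAddCommGroup X] [NormedSpace ℝ X] [CompleteSpace X]
    [NormedAddCommGroup Y] [NormedSpace ℝ Y] [CompleteSpace Y]
    [NormedAddCommGroup Z] [NormedSpace ℝ Z] [CompleteSpace Z]
    {I : Type*} (A : I → X →L[ℝ] Y)
    (hcc : ∀ U : Set X, IsBounded U → IsCompact (closure (⋃ i, A i '' U)))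
    (L : ℕ → Y →L[ℝ] Z) (Llim : Y →L[ℝ] Z)
    (hlim : ∀ y : Y, Tendsto (fun n => L n y) atTop (𝓝 (Llim y))) :
    ∀ ε > (0 : ℝ), ∃ N : ℕ, ∀ n ≥ N, ∀ i : I, ‖(L n - Llim).comp (A i)‖ < ε := by
  intro ε hε
  -- uniform bound on ‖L n - Llim‖ via Banach–Steinhaus
  obtain ⟨C, hC⟩ : ∃ C, ∀ n, ‖L n - Llim‖ ≤ C := by
    obtain ⟨C, hC⟩ := banach_steinhaus (g := fun n => L n - Llim) (fun y => by
      obtain ⟨c, hc⟩ := ((hlim y).sub_const (Llim y)).norm.bddAbove_range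
      exact ⟨c, fun n => hc ⟨n, rfl⟩⟩)
    exact ⟨C, hC⟩
  have hC0 : (0:ℝ) ≤ C := le_trans (norm_nonneg _) (hC 0)
  set K := closure (⋃ i, A i '' Metric.closedBall (0:X) 1) with hK
  have hKc : IsCompact K := hcc _ Metric.isBounded_closedBall
  set δ : ℝ := ε / 4 / (C + 1) with hδ
  have hδ0 : 0 < δ := by positivity
  obtain ⟨t, htf, htc⟩ := Metric.totallyBounded_iff.1 hKc.totallyBounded δ hδ0
  have hev : ∀ᶠ n in atTop, ∀ y ∈ t, ‖(L n - Llim) y‖ < ε / 4 := by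
    rw [htf.eventually_all]
    intro y _
    have := (tendsto_iff_norm_sub_tendsto_zero.1 (hlim y)).eventually_lt_const
      (show (0:ℝ) < ε / 4 by positivity)
    simpa using this
  obtain ⟨N, hN⟩ := eventually_atTop.1 hev
  refine ⟨N, fun n hn i => ?_⟩
  have key : ∀ u : X, ‖u‖ ≤ 1 → ‖(L n - Llim) (A i u)‖ ≤ ε / 2 := by
    intro u hu
    have hmem : A i u ∈ K := subset_closure (Set.mem_iUnion.2 ⟨i, ⟨u, by
      simpa [Metric.mem_closedBall] using hu, rfl⟩⟩)
    obtain ⟨y, hy, hyd⟩ : ∃ y ∈ t, A i u ∈ Metric.ball y δ := by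
      simpa using htc hmem
    have h1 : ‖(L n - Llim) (A i u - y)‖ ≤ C * δ := by
      calc ‖(L n - Llim) (A i u - y)‖ ≤ ‖L n - Llim‖ * ‖A i u - y‖ :=
            (L n - Llim).le_opNorm _
        _ ≤ C * δ := by
            apply mul_le_mul (hC n) (le_of_lt (by simpa [dist_eq_norm] using hyd))
              (norm_nonneg _) hC0
    have h2 : ‖(L n - Llim) y‖ < ε / 4 := hN n hn y hy
    have h3 : C * δ ≤ ε / 4 := by
      rw [hδ, div_div]
      rw [mul_comm, div_mul_eq_mul_div, div_le_div_iff₀ (by positivity) (by positivity)]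
      nlinarith
    calc ‖(L n - Llim) (A i u)‖
        = ‖(L n - Llim) (A i u - y) + (L n - Llim) y‖ := by rw [← map_add, sub_add_cancel]
      _ ≤ ‖(L n - Llim) (A i u - y)‖ + ‖(L n - Llim) y‖ := norm_add_le _ _
      _ ≤ ε / 4 + ε / 4 := add_le_add (h1.trans h3) h2.le
      _ = ε / 2 := by ring
  have hop : ‖(L n - Llim).comp (A i)‖ ≤ ε / 2 := by
    apply ContinuousLinearMap.opNorm_le_bound _ (by positivity)
    intro x
    rcases eq_or_ne x 0 with rfl | hx
    · simp
    · have hx0 : (0:ℝ) < ‖x‖ := norm_pos_iff.2 hx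
      have hu : ‖(‖x‖⁻¹ • x)‖ ≤ 1 := by
        rw [norm_smul, norm_inv, norm_norm, inv_mul_cancel₀ hx0.ne']
      have := key (‖x‖⁻¹ • x) hu
      have heq : (L n - Llim) (A i (‖x‖⁻¹ • x)) = ‖x‖⁻¹ • (L n - Llim) (A i x) := by
        simp [map_smul]
      rw [heq, norm_smul, norm_inv, norm_norm] at this
      calc ‖((L n - Llim).comp (A i)) x‖ = ‖(L n - Llim) (A i x)‖ := rfl
        _ = ‖x‖ * (‖x‖⁻¹ * ‖(L n - Llim) (A i x)‖) := by
            field_simp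
        _ ≤ ‖x‖ * (ε / 2) := by
            exact mul_le_mul_of_nonneg_left this hx0.le
        _ = ε / 2 * ‖x‖ := by ring
  linarith
end

section
/- Let X be a Banach space, let A : X → X be a compact continuous linear operator such that I − A is bijective, and let B : X → X be its continuous inverse (so B ∘ (I − A) = (I − A) ∘ B = I). Let (A_n) be a collectively compact sequence of continuous linear operators on X with A_n x → A x for every x ∈ X. Then for every n with ‖B ∘ (A_n − A) ∘ A_n‖ < 1, the operator I − A_n is bijective, its inverse is a continuous linear operator, and ‖(I − A_n)^{-1}‖ ≤ (1 + ‖B ∘ A_n‖)/(1 − ‖B ∘ (A_n − A) ∘ A_n‖). -/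
open Filter Topology Bornology

/-- Riesz theory: if `K` is a compact operator and `1 - K` has a left inverse,
then `1 - K` is surjective. -/
lemma riesz_surj_aux {X : Type*} [NormedAddCommGroup X] [NormedSpace ℝ X]
    (K S : X →L[ℝ] X)
    (hK : ∀ U : Set X, IsBounded U → IsCompact (closure (K '' U)))
    (hS : S * (1 - K) = 1) : Function.Surjective (1 - K : X →L[ℝ] X) := by
  set T : X →L[ℝ] X := 1 - K with hT
  have hST : ∀ y : X, S (T y) = y := by
    intro y
    have := ContinuousLinearMap.ext_iff.mp hS y
    simpa [ContinuousLinearMap.mul_apply] using this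
  have hid : ∀ (m : ℕ) (x : X), (S ^ m) ((T ^ m) x) = x := by
    intro m
    induction m with
    | zero => intro x; simp
    | succ m ih =>
      intro x
      have h1 : (T ^ (m + 1)) x = T ((T ^ m) x) := by
        rw [pow_succ']; rfl
      have h2 : ∀ y, (S ^ (m + 1)) y = (S ^ m) (S y) := by
        intro y; rw [pow_succ]; rfl
      rw [h1, h2, hST, ih]
  have hinj : ∀ m : ℕ, Function.Injective (T ^ m : X →L[ℝ] X) := by
    intro m x y h
    calc x = (S ^ m) ((T ^ m) x) := (hid m x).symm
    _ = (S ^ m) ((T ^ m) y) := by rw [h]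
    _ = y := hid m y
  set F : ℕ → Set X := fun m => Set.range (T ^ m : X →L[ℝ] X) with hF
  have hFclosed : ∀ m, IsClosed (F m) := by
    intro m
    have : F m = {x | (T ^ m) ((S ^ m) x) = x} := by
      ext x
      constructor
      · rintro ⟨u, rfl⟩; simp only [Set.mem_setOf_eq]; rw [hid m u]
      · intro hx; exact ⟨(S ^ m) x, hx⟩
    rw [this]
    exact isClosed_eq ((T ^ m).continuous.comp (S ^ m).continuous) continuous_id
  have hmono : ∀ {m l : ℕ}, m ≤ l → F l ⊆ F m := by
    intro m l hml x hx
    obtain ⟨u, hu⟩ := hx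
    refine ⟨(T ^ (l - m)) u, ?_⟩
    rw [← hu, ← ContinuousLinearMap.mul_apply, ← pow_add,
      Nat.add_sub_cancel' hml]
  have hF0 : ∀ m, (0 : X) ∈ F m := fun m => ⟨0, map_zero _⟩
  by_contra hns
  rw [Function.Surjective] at hns
  push_neg at hns
  obtain ⟨y, hy⟩ := hns
  have hy : ∀ x, T x ≠ y := fun x h => hy x h
  have hynot : ∀ m, (T ^ m) y ∉ F (m + 1) := by
    intro m hmem
    obtain ⟨u, hu⟩ := hmem
    have h1 : (T ^ (m + 1)) u = (T ^ m) (T u) := by rw [pow_succ]; rfl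
    rw [h1] at hu
    exact hy u (hinj m hu)
  -- Riesz sequence
  have key : ∀ m, ∃ z : X, z ∈ F m ∧ ‖z‖ = 1 ∧
      ∀ w ∈ F (m + 1), (1 : ℝ) / 2 ≤ ‖z - w‖ := by
    intro m
    set d := Metric.infDist ((T ^ m) y) (F (m + 1)) with hd'
    have hne : (F (m + 1)).Nonempty := ⟨0, hF0 _⟩
    have hd : 0 < d :=
      ((hFclosed (m + 1)).notMem_iff_infDist_pos hne).mp (hynot m)
    obtain ⟨g, hg, hgd⟩ : ∃ g ∈ F (m + 1), dist ((T ^ m) y) g < 2 * d := by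
      exact (Metric.infDist_lt_iff hne).mp (by linarith)
    set v : X := (T ^ m) y - g with hv
    have hvnorm : ‖v‖ < 2 * d := by rwa [dist_eq_norm] at hgd
    have hdlev : d ≤ ‖v‖ := by
      rw [hv, ← dist_eq_norm]; exact Metric.infDist_le_dist_of_mem hg
    have hvpos : 0 < ‖v‖ := lt_of_lt_of_le hd hdlev
    have hvne : v ≠ 0 := by
      intro h; rw [h, norm_zero] at hvpos; exact lt_irrefl 0 hvpos
    refine ⟨‖v‖⁻¹ • v, ?_, norm_smul_inv_norm hvne, ?_⟩
    · obtain ⟨u', hu'⟩ := hmono (Nat.le_succ m) hg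
      exact ⟨‖v‖⁻¹ • (y - u'), by rw [map_smul, map_sub, hu']⟩
    · intro w hw
      have hmemw : g + ‖v‖ • w ∈ F (m + 1) := by
        obtain ⟨a, ha⟩ := hg
        obtain ⟨b, hb⟩ := hw
        exact ⟨a + ‖v‖ • b, by rw [map_add, map_smul, ha, hb]⟩
      have h1 : d ≤ ‖(T ^ m) y - (g + ‖v‖ • w)‖ := by
        rw [← dist_eq_norm]; exact Metric.infDist_le_dist_of_mem hmemw
      have h2 : (T ^ m) y - (g + ‖v‖ • w) = v - ‖v‖ • w := by
        rw [hv]; abel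
      rw [h2] at h1
      have h3 : ‖v‖⁻¹ • (v - ‖v‖ • w) = ‖v‖⁻¹ • v - w := by
        rw [smul_sub, smul_smul, inv_mul_cancel₀ (ne_of_gt hvpos), one_smul]
      rw [← h3, norm_smul, Real.norm_eq_abs, abs_of_pos (inv_pos.mpr hvpos)]
      calc (1 : ℝ) / 2 = ‖v‖⁻¹ * (‖v‖ / 2) := by field_simp
      _ ≤ ‖v‖⁻¹ * d := by
          apply mul_le_mul_of_nonneg_left _ (inv_nonneg.mpr hvpos.le)
          linarith
      _ ≤ ‖v‖⁻¹ * ‖v - ‖v‖ • w‖ :=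
          mul_le_mul_of_nonneg_left h1 (inv_nonneg.mpr hvpos.le)
  choose z hzmem hznorm hzsep using key
  -- images under K are (1/2)-separated
  have hsep : ∀ m l : ℕ, m < l → (1 : ℝ) / 2 ≤ ‖K (z m) - K (z l)‖ := by
    intro m l hml
    have hTz : ∀ k, T (z k) ∈ F (k + 1) := by
      intro k
      obtain ⟨a, ha⟩ := hzmem k
      exact ⟨a, by rw [pow_succ', ContinuousLinearMap.mul_apply, ha]⟩
    have hw : T (z m) + z l - T (z l) ∈ F (m + 1) := by
      obtain ⟨a, ha⟩ := hTz m
      obtain ⟨c, hc⟩ := hmono (Nat.succ_le_of_lt hml) (hzmem l)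
      obtain ⟨e, he⟩ := hmono (by omega : m + 1 ≤ l + 1) (hTz l)
      exact ⟨a + c - e, by rw [map_sub, map_add, ha, hc, he]⟩
    have heq : K (z m) - K (z l) = z m - (T (z m) + z l - T (z l)) := by
      have hKx : ∀ x : X, K x = x - T x := by
        intro x; rw [hT]; simp
      rw [hKx (z m), hKx (z l)]; abel
    rw [heq]
    exact hzsep m _ hw
  -- compactness contradiction
  have hcomp := hK (Metric.closedBall (0 : X) 1) Metric.isBounded_closedBall
  have hin : ∀ m, K (z m) ∈ closure (K '' Metric.closedBall (0 : X) 1) := by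
    intro m
    exact subset_closure ⟨z m, by simp [Metric.mem_closedBall, hznorm m], rfl⟩
  obtain ⟨c, -, φ, hφ, hlimc⟩ := hcomp.tendsto_subseq hin
  obtain ⟨N, hN⟩ := (Metric.tendsto_atTop.mp hlimc) (1 / 5) (by norm_num)
  have h1 := hN N le_rfl
  have h2 := hN (N + 1) (Nat.le_succ N)
  have hlt : φ N < φ (N + 1) := hφ (Nat.lt_succ_self N)
  have h3 := hsep (φ N) (φ (N + 1)) hlt
  rw [← dist_eq_norm] at h3
  have h4 : dist (K (z (φ N))) (K (z (φ (N + 1)))) ≤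
      dist (K (z (φ N))) c + dist c (K (z (φ (N + 1)))) := dist_triangle _ _ _
  rw [dist_comm c] at h4
  simp only [Function.comp_apply] at h1 h2
  linarith

/-- Anselone: let `A` be compact with `I - A` bijective with
continuous inverse `B`, and let `(A_n)` be collectively compact with `A_n → A`
pointwise. Then for every `n` with `‖B ∘ (A_n - A) ∘ A_n‖ < 1`, the operator
`I - A_n` is bijective, its inverse is a continuous linear operator, and
`‖(I - A_n)⁻¹‖ ≤ (1 + ‖B ∘ A_n‖) / (1 - ‖B ∘ (A_n - A) ∘ A_n‖)`. -/
theorem stmt_11 {X : Type*} [NormedAddCommGroup X] [NormedSpace ℝ X]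
    [CompleteSpace X]
    (A : X →L[ℝ] X)
    (hAcomp : ∀ U : Set X, IsBounded U → IsCompact (closure (A '' U)))
    (B : X →L[ℝ] X)
    (hB₁ : B.comp (1 - A) = 1) (hB₂ : (1 - A).comp B = 1)
    (An : ℕ → X →L[ℝ] X)
    (hcc : ∀ U : Set X, IsBounded U → IsCompact (closure (⋃ n, An n '' U)))
    (hlim : ∀ x : X, Tendsto (fun n => An n x) atTop (𝓝 (A x))) :
    ∀ n : ℕ, ‖B.comp ((An n - A).comp (An n))‖ < 1 →
      Function.Bijective ((1 - An n : X →L[ℝ] X)) ∧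
      ∃ Bn : X →L[ℝ] X, Bn.comp (1 - An n) = 1 ∧ (1 - An n).comp Bn = 1 ∧
        ‖Bn‖ ≤ (1 + ‖B.comp (An n)‖) / (1 - ‖B.comp ((An n - A).comp (An n))‖) := by
  intro n hn
  set a : X →L[ℝ] X := An n with ha
  set C : X →L[ℝ] X := B * ((a - A) * a) with hC
  have hCnorm : ‖C‖ < 1 := hn
  -- the algebraic identity
  have hBA : B * A = B - 1 := by
    have h : B * (1 - A) = 1 := hB₁
    rw [mul_sub, mul_one] at h
    rw [eq_sub_iff_add_eq, add_comm]
    exact (sub_eq_iff_eq_add.mp h).symm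
  have key : (1 + B * a) * (1 - a) = 1 - C := by
    have expand : C = B * (a * a) - (B * A) * a := by rw [hC]; noncomm_ring
    rw [expand, hBA]; noncomm_ring
  -- Neumann inverse of 1 - C
  set u : (X →L[ℝ] X)ˣ := Units.oneSub C hCnorm with hu
  have huval : (u : X →L[ℝ] X) = 1 - C := rfl
  have huinv : ((u⁻¹ : (X →L[ℝ] X)ˣ) : X →L[ℝ] X) = ∑' k : ℕ, C ^ k := rfl
  have huinv_norm : ‖((u⁻¹ : (X →L[ℝ] X)ˣ) : X →L[ℝ] X)‖ ≤ (1 - ‖C‖)⁻¹ := by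
    rw [huinv]
    have hsum : HasSum (fun k : ℕ => ‖C‖ ^ k) (1 - ‖C‖)⁻¹ :=
      hasSum_geometric_of_lt_one (norm_nonneg C) hCnorm
    refine tsum_of_norm_bounded hsum ?_
    intro k
    cases k with
    | zero =>
      have h1 : ‖(1 : X →L[ℝ] X)‖ ≤ 1 := ContinuousLinearMap.norm_id_le
      simpa using h1
    | succ k => exact norm_pow_le' C (Nat.succ_pos k)
  set Bn : X →L[ℝ] X := ((u⁻¹ : (X →L[ℝ] X)ˣ) : X →L[ℝ] X) * (1 + B * a) with hBn
  have hleft : Bn * (1 - a) = 1 := by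
    rw [hBn, mul_assoc, key, ← huval, Units.inv_mul]
  -- surjectivity via Riesz theory
  have hacomp : ∀ U : Set X, IsBounded U → IsCompact (closure (a '' U)) := by
    intro U hU
    refine (hcc U hU).of_isClosed_subset isClosed_closure ?_
    exact closure_mono (Set.subset_iUnion (fun m => An m '' U) n)
  have hsurj : Function.Surjective (1 - a : X →L[ℝ] X) :=
    riesz_surj_aux a Bn hacomp hleft
  have hleft' : ∀ x : X, Bn ((1 - a) x) = x := by
    intro x
    have := ContinuousLinearMap.ext_iff.mp hleft x
    simpa [ContinuousLinearMap.mul_apply] using this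
  have hinj : Function.Injective (1 - a : X →L[ℝ] X) := by
    intro x y h
    rw [← hleft' x, h, hleft' y]
  have hright : (1 - a : X →L[ℝ] X) * Bn = 1 := by
    ext x
    obtain ⟨y, hy⟩ := hsurj x
    simp only [ContinuousLinearMap.mul_apply, ContinuousLinearMap.one_apply]
    rw [← hy, hleft' y]
  -- norm bound
  have hBnnorm : ‖Bn‖ ≤ (1 + ‖B * a‖) / (1 - ‖C‖) := by
    calc ‖Bn‖ ≤ ‖((u⁻¹ : (X →L[ℝ] X)ˣ) : X →L[ℝ] X)‖ * ‖1 + B * a‖ :=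
        norm_mul_le _ _
    _ ≤ (1 - ‖C‖)⁻¹ * (1 + ‖B * a‖) := by
        apply mul_le_mul huinv_norm _ (norm_nonneg _)
          (inv_nonneg.mpr (by linarith))
        calc ‖(1 : X →L[ℝ] X) + B * a‖ ≤ ‖(1 : X →L[ℝ] X)‖ + ‖B * a‖ :=
            norm_add_le _ _
        _ ≤ 1 + ‖B * a‖ := by
            have := ContinuousLinearMap.norm_id_le (𝕜 := ℝ) (E := X)
            simp only [ContinuousLinearMap.one_def]
            linarith [ContinuousLinearMap.norm_id_le (𝕜 := ℝ) (E := X)]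
    _ = (1 + ‖B * a‖) / (1 - ‖C‖) := by rw [div_eq_inv_mul]
  refine ⟨⟨hinj, hsurj⟩, Bn, hleft, hright, ?_⟩
  exact hBnnorm
end

section
/- Let X be a Banach space, let A : X → X be a compact continuous linear operator such that I − A is bijective with continuous inverse B : X → X, and let (A_n) be a collectively compact sequence of continuous linear operators on X with A_n x → A x for every x ∈ X. Suppose n is such that ‖B ∘ (A_n − A) ∘ A_n‖ < 1, and suppose y, y_n, f, f_n ∈ X satisfy y − A y = f and y_n − A_n y_n = f_n. Then ‖y_n − y‖ ≤ ((1 + ‖B ∘ A_n‖)/(1 − ‖B ∘ (A_n − A) ∘ A_n‖)) · (‖(A_n − A) y‖ + ‖f_n − f‖). -/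
open Filter Topology Bornology

/-- Anselone error estimate: with `A` compact, `I - A` bijective
with continuous inverse `B`, `(A_n)` collectively compact and `A_n → A`
pointwise, if `‖B ∘ (A_n - A) ∘ A_n‖ < 1` and `y - A y = f`, `y_n - A_n y_n = f_n`,
then `‖y_n - y‖ ≤ ((1 + ‖B ∘ A_n‖) / (1 - ‖B ∘ (A_n - A) ∘ A_n‖)) ·
(‖(A_n - A) y‖ + ‖f_n - f‖)`. -/
theorem stmt_12 {X : Type*} [NormedAddCommGroup X] [NormedSpace ℝ X]
    [CompleteSpace X]
    (A : X →L[ℝ] X)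
    (hAcomp : ∀ U : Set X, IsBounded U → IsCompact (closure (A '' U)))
    (B : X →L[ℝ] X)
    (hB₁ : B.comp (1 - A) = 1) (hB₂ : (1 - A).comp B = 1)
    (An : ℕ → X →L[ℝ] X)
    (hcc : ∀ U : Set X, IsBounded U → IsCompact (closure (⋃ n, An n '' U)))
    (hlim : ∀ x : X, Tendsto (fun n => An n x) atTop (𝓝 (A x)))
    (n : ℕ) (hn : ‖B.comp ((An n - A).comp (An n))‖ < 1)
    (y yn f fn : X) (hy : y - A y = f) (hyn : yn - An n yn = fn) :
    ‖yn - y‖ ≤ (1 + ‖B.comp (An n)‖) / (1 - ‖B.comp ((An n - A).comp (An n))‖) *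
      (‖(An n - A) y‖ + ‖fn - f‖) := by
  set M : X →L[ℝ] X := B.comp ((An n - A).comp (An n)) with hM
  set C : X →L[ℝ] X := B.comp (An n) with hC
  set e : X := yn - y with he
  set g : X := fn - f + (An n - A) y with hg
  have hMmul : M = B * ((An n - A) * An n) := rfl
  have hCmul : C = B * An n := rfl
  -- operator identity (1 + C)(1 - An) = 1 - M
  have key : (1 + C) * (1 - An n) = 1 - M := by
    have h0 : (1 + C) * (1 - An n) - (1 - M) = (B * (1 - A) - 1) * An n := by
      rw [hMmul, hCmul]; noncomm_ring
    have hB₁' : B * (1 - A) = 1 := hB₁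
    rw [hB₁', sub_self, zero_mul] at h0
    exact sub_eq_zero.mp h0
  -- (1 - An n) e = g
  have hge : (1 - An n) e = g := by
    rw [ContinuousLinearMap.sub_apply, ContinuousLinearMap.one_apply, he, hg,
      ContinuousLinearMap.sub_apply, map_sub, ← hyn, ← hy]
    abel
  -- element identity: e - M e = g + C g
  have helt : e - M e = g + C g := by
    have h1 : ((1 + C) * (1 - An n)) e = (1 - M) e := by rw [key]
    rw [ContinuousLinearMap.mul_apply, hge, ContinuousLinearMap.add_apply,
      ContinuousLinearMap.one_apply, ContinuousLinearMap.sub_apply,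
      ContinuousLinearMap.one_apply] at h1
    exact h1.symm
  -- norm estimates
  have hMe : ‖M e‖ ≤ ‖M‖ * ‖e‖ := M.le_opNorm e
  have hCg : ‖C g‖ ≤ ‖C‖ * ‖g‖ := C.le_opNorm g
  have hgnorm : ‖g‖ ≤ ‖(An n - A) y‖ + ‖fn - f‖ := by
    rw [hg]
    calc ‖fn - f + (An n - A) y‖ ≤ ‖fn - f‖ + ‖(An n - A) y‖ := norm_add_le _ _
      _ = ‖(An n - A) y‖ + ‖fn - f‖ := by ring
  have h2 : ‖e‖ - ‖M e‖ ≤ ‖e - M e‖ := norm_sub_norm_le e (M e)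
  have h3 : ‖g + C g‖ ≤ ‖g‖ + ‖C g‖ := norm_add_le _ _
  have hpos : 0 < 1 - ‖M‖ := by linarith
  rw [div_mul_eq_mul_div, le_div_iff₀ hpos]
  nlinarith [norm_nonneg e, norm_nonneg g, norm_nonneg C,
    mul_le_mul_of_nonneg_left hgnorm (by positivity : (0:ℝ) ≤ 1 + ‖C‖), helt ▸ h3]
end

section
/- Let X be a Banach space, let A : X → X be a compact continuous linear operator such that I − A is bijective with continuous inverse, and let (A_n) be a collectively compact sequence of continuous linear operators on X with A_n x → A x for every x ∈ X. Then there exist a constant C > 0 and an index N such that for every n ≥ N the operator I − A_n is bijective with continuous inverse, and whenever y, y_n, f, f_n ∈ X satisfy y − A y = f and y_n − A_n y_n = f_n, one has ‖y_n − y‖ ≤ C·(‖(A_n − A) y‖ + ‖f_n − f‖). -/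
open Filter Topology Bornology

lemma ring_id1 {R : Type*} [Ring R] (A P B : R) (hIB : (1 - A) * B = 1)
    (hBA : B * A = B - 1) :
    (1 - (A + P)) * (B * (1 + P)) = 1 - P * (B * (A + P)) := by
  have h1 : (1 - (A + P)) * (B * (1 + P))
      = ((1 - A) * B) * (1 + P) - P * B - P * B * P := by noncomm_ring
  have h2 : 1 - P * (B * (A + P)) = 1 - P * (B * A) - P * B * P := by noncomm_ring
  rw [h1, h2, hIB, hBA]; noncomm_ring

lemma ring_id2 {R : Type*} [Ring R] (A P B : R) (hBI : B * (1 - A) = 1) :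
    (B * (1 + P)) * (1 - (A + P)) = 1 - B * (P * (A + P)) := by
  have h1 : (B * (1 + P)) * (1 - (A + P))
      = B * (1 - A) - B * (P * A) - B * (P * P) := by noncomm_ring
  have h2 : 1 - B * (P * (A + P)) = 1 - B * (P * A) - B * (P * P) := by noncomm_ring
  rw [h1, h2, hBI]

/-- Pointwise convergence of a uniformly bounded family is uniform on compact sets. -/
lemma unif_conv_on_compact {X : Type*} [NormedAddCommGroup X] [NormedSpace ℝ X]
    (A : X →L[ℝ] X) (An : ℕ → X →L[ℝ] X) {M : ℝ} (hM : ∀ n, ‖An n‖ ≤ M)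
    (hlim : ∀ x : X, Tendsto (fun n => An n x) atTop (𝓝 (A x)))
    {K : Set X} (hK : IsCompact K) {ε : ℝ} (hε : 0 < ε) :
    ∃ N : ℕ, ∀ n ≥ N, ∀ z ∈ K, ‖An n z - A z‖ ≤ ε := by
  have hM0 : 0 ≤ M := le_trans (norm_nonneg _) (hM 0)
  set δ : ℝ := ε / (3 * (M + ‖A‖ + 1)) with hδdef
  have hden : 0 < 3 * (M + ‖A‖ + 1) := by positivity
  have hδ : 0 < δ := div_pos hε hden
  obtain ⟨t, htK, hcov⟩ := hK.elim_nhds_subcover (fun z => Metric.ball z δ)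
    (fun z _ => Metric.ball_mem_nhds z hδ)
  have h1 : ∀ᶠ n in atTop, ∀ z ∈ t, ‖An n z - A z‖ ≤ ε / 3 := by
    rw [Filter.eventually_all_finset]
    intro z _
    obtain ⟨N, hN⟩ := Metric.tendsto_atTop.1 (hlim z) (ε / 3) (by positivity)
    exact eventually_atTop.2 ⟨N, fun n hn => by
      have := hN n hn; rw [dist_eq_norm] at this; exact this.le⟩
  obtain ⟨N, hN⟩ := eventually_atTop.1 h1
  refine ⟨N, fun n hn z hzK => ?_⟩
  obtain ⟨i, hit, hzi⟩ := Set.mem_iUnion₂.1 (hcov hzK)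
  have hdist : ‖z - i‖ ≤ δ := by
    have := Metric.mem_ball.1 hzi
    rw [dist_eq_norm] at this; exact this.le
  have e1 : ‖An n (z - i)‖ ≤ M * δ := by
    calc ‖An n (z - i)‖ ≤ ‖An n‖ * ‖z - i‖ := (An n).le_opNorm _
      _ ≤ M * δ := by
          exact mul_le_mul (hM n) hdist (norm_nonneg _) hM0
  have e2 : ‖A (i - z)‖ ≤ ‖A‖ * δ := by
    calc ‖A (i - z)‖ ≤ ‖A‖ * ‖i - z‖ := A.le_opNorm _
      _ ≤ ‖A‖ * δ := by
          have : ‖i - z‖ ≤ δ := by rwa [norm_sub_rev]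
          exact mul_le_mul_of_nonneg_left this (norm_nonneg _)
  have e3 : ‖An n i - A i‖ ≤ ε / 3 := hN n hn i hit
  have key : An n z - A z = An n (z - i) + (An n i - A i) + A (i - z) := by
    simp only [map_sub]; abel
  have hδsum : (M + ‖A‖ + 1) * δ = ε / 3 := by
    rw [hδdef]; field_simp
  calc ‖An n z - A z‖ = ‖An n (z - i) + (An n i - A i) + A (i - z)‖ := by rw [key]
    _ ≤ ‖An n (z - i)‖ + ‖An n i - A i‖ + ‖A (i - z)‖ := norm_add₃_le
    _ ≤ M * δ + ε / 3 + ‖A‖ * δ := by linarith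
    _ ≤ ε := by nlinarith [hδ.le, hε.le, norm_nonneg A]

set_option maxHeartbeats 1600000 in
/-- with `A` compact, `I - A` bijective with continuous inverse
`B`, `(A_n)` collectively compact and `A_n → A` pointwise, there exist `C > 0`
and `N` such that for all `n ≥ N` the operator `I - A_n` is bijective with a
continuous linear inverse, and whenever `y - A y = f` and `y_n - A_n y_n = f_n`
one has `‖y_n - y‖ ≤ C (‖(A_n - A) y‖ + ‖f_n - f‖)`. -/
theorem stmt_13 {X : Type*} [NormedAddCommGroup X] [NormedSpace ℝ X]
    [CompleteSpace X]
    (A : X →L[ℝ] X)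
    (hAcomp : ∀ U : Set X, IsBounded U → IsCompact (closure (A '' U)))
    (B : X →L[ℝ] X)
    (hB₁ : B.comp (1 - A) = 1) (hB₂ : (1 - A).comp B = 1)
    (An : ℕ → X →L[ℝ] X)
    (hcc : ∀ U : Set X, IsBounded U → IsCompact (closure (⋃ n, An n '' U)))
    (hlim : ∀ x : X, Tendsto (fun n => An n x) atTop (𝓝 (A x))) :
    ∃ C > (0 : ℝ), ∃ N : ℕ, ∀ n ≥ N,
      Function.Bijective ((1 - An n : X →L[ℝ] X)) ∧
      (∃ Bn : X →L[ℝ] X, Bn.comp (1 - An n) = 1 ∧ (1 - An n).comp Bn = 1) ∧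
      ∀ y yn f fn : X, y - A y = f → yn - An n yn = fn →
        ‖yn - y‖ ≤ C * (‖(An n - A) y‖ + ‖fn - f‖) := by
  -- basic conversions
  have hBI : B * (1 - A) = 1 := by rw [ContinuousLinearMap.mul_def]; exact hB₁
  have hIB : (1 - A) * B = 1 := by rw [ContinuousLinearMap.mul_def]; exact hB₂
  have hBA : B * A = B - 1 := by
    rw [eq_sub_iff_add_eq, ← hBI, mul_sub, mul_one]; abel
  -- uniform bound on the `An`
  obtain ⟨M, hM⟩ : ∃ M, ∀ n, ‖An n‖ ≤ M := by
    apply banach_steinhaus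
    intro x
    obtain ⟨C, hC⟩ := ((hlim x).norm.bddAbove_range)
    exact ⟨C, fun n => hC ⟨n, rfl⟩⟩
  have hM0 : 0 ≤ M := le_trans (norm_nonneg _) (hM 0)
  -- the compact set
  set S : Set X := closure (⋃ n, An n '' Metric.closedBall 0 1) with hSdef
  have hScomp : IsCompact S := hcc _ Metric.isBounded_closedBall
  set K : Set X := S ∪ B '' S with hKdef
  have hKcomp : IsCompact K := hScomp.union (hScomp.image B.continuous)
  have hmemS : ∀ n, ∀ u : X, ‖u‖ ≤ 1 → An n u ∈ S := by
    intro n u hu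
    exact subset_closure (Set.mem_iUnion.2 ⟨n, ⟨u, by
      simpa [Metric.mem_closedBall, dist_zero_right] using hu, rfl⟩⟩)
  -- uniform smallness of `An - A` on K
  set ε₀ : ℝ := ((‖B‖ + 1) * 2)⁻¹ with hε₀def
  have hε₀pos : 0 < ε₀ := by positivity
  have hε₀half : ε₀ ≤ 1 / 2 := by
    rw [hε₀def]
    rw [inv_le_comm₀ (by positivity) (by norm_num)]
    nlinarith [norm_nonneg B]
  have hBε₀ : ‖B‖ * ε₀ ≤ 1 / 2 := by
    rw [hε₀def]
    rw [div_eq_mul_inv, one_mul, mul_inv_le_iff₀ (by positivity)]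
    nlinarith [norm_nonneg B]
  obtain ⟨N, hN⟩ := unif_conv_on_compact A An hM hlim hKcomp hε₀pos
  -- the constant
  set C : ℝ := 2 * ‖B‖ * (1 + M + ‖A‖) + 1 with hCdef
  have hCpos : 0 < C := by positivity
  refine ⟨C, hCpos, N, fun n hn => ?_⟩
  -- key objects for this n
  set P : X →L[ℝ] X := An n - A with hPdef
  have hAnP : An n = A + P := by rw [hPdef]; abel
  set s : X →L[ℝ] X := B * (1 + P) with hsdef
  set D : X →L[ℝ] X := P * (B * An n) with hDdef
  set E : X →L[ℝ] X := B * (P * An n) with hEdef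
  -- norm bounds on D and E
  have hPz : ∀ z ∈ K, ‖P z‖ ≤ ε₀ := by
    intro z hz
    have := hN n hn z hz
    simpa [hPdef, ContinuousLinearMap.sub_apply] using this
  have hDnorm : ‖D‖ ≤ ε₀ := by
    apply ContinuousLinearMap.opNorm_le_bound _ hε₀pos.le
    intro x
    rcases eq_or_ne x 0 with rfl | hx
    · simp
    · set u : X := ‖x‖⁻¹ • x with hudef
      have hxn : (0:ℝ) < ‖x‖ := norm_pos_iff.2 hx
      have hun : ‖u‖ ≤ 1 := by
        rw [hudef, norm_smul, norm_inv, norm_norm, inv_mul_cancel₀ hxn.ne']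
      have hz : B (An n u) ∈ K := Set.mem_union_right _ ⟨An n u, hmemS n u hun, rfl⟩
      have hsc : D x = ‖x‖ • D u := by
        rw [hudef, map_smul, smul_smul, mul_inv_cancel₀ hxn.ne', one_smul]
      have : ‖D u‖ ≤ ε₀ := by
        have : D u = P (B (An n u)) := by
          simp [hDdef, ContinuousLinearMap.mul_apply]
        rw [this]; exact hPz _ hz
      calc ‖D x‖ = ‖x‖ * ‖D u‖ := by rw [hsc, norm_smul, norm_norm]
        _ ≤ ‖x‖ * ε₀ := mul_le_mul_of_nonneg_left this hxn.le
        _ = ε₀ * ‖x‖ := by ring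
  have hEnorm : ‖E‖ ≤ ‖B‖ * ε₀ := by
    apply ContinuousLinearMap.opNorm_le_bound _ (by positivity)
    intro x
    rcases eq_or_ne x 0 with rfl | hx
    · simp
    · set u : X := ‖x‖⁻¹ • x with hudef
      have hxn : (0:ℝ) < ‖x‖ := norm_pos_iff.2 hx
      have hun : ‖u‖ ≤ 1 := by
        rw [hudef, norm_smul, norm_inv, norm_norm, inv_mul_cancel₀ hxn.ne']
      have hz : An n u ∈ K := Set.mem_union_left _ (hmemS n u hun)
      have hsc : E x = ‖x‖ • E u := by
        rw [hudef, map_smul, smul_smul, mul_inv_cancel₀ hxn.ne', one_smul]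
      have hEu : ‖E u‖ ≤ ‖B‖ * ε₀ := by
        have h1 : E u = B (P (An n u)) := by
          simp [hEdef, ContinuousLinearMap.mul_apply]
        rw [h1]
        calc ‖B (P (An n u))‖ ≤ ‖B‖ * ‖P (An n u)‖ := B.le_opNorm _
          _ ≤ ‖B‖ * ε₀ := mul_le_mul_of_nonneg_left (hPz _ hz) (norm_nonneg _)
      calc ‖E x‖ = ‖x‖ * ‖E u‖ := by rw [hsc, norm_smul, norm_norm]
        _ ≤ ‖x‖ * (‖B‖ * ε₀) := mul_le_mul_of_nonneg_left hEu hxn.le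
        _ = ‖B‖ * ε₀ * ‖x‖ := by ring
  have hDlt : ‖D‖ < 1 := lt_of_le_of_lt (hDnorm.trans hε₀half) (by norm_num)
  have hElt : ‖E‖ < 1 := lt_of_le_of_lt (hEnorm.trans hBε₀) (by norm_num)
  -- algebraic identities
  have key1 : (1 - An n) * s = 1 - D := by
    rw [hsdef, hDdef, hAnP]
    exact ring_id1 A P B hIB hBA
  have key2 : s * (1 - An n) = 1 - E := by
    rw [hsdef, hEdef, hAnP]
    exact ring_id2 A P B hBI
  -- units
  obtain ⟨w, hw1, hw2⟩ : ∃ w : X →L[ℝ] X, (1 - D) * w = 1 ∧ w * (1 - D) = 1 := by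
    refine ⟨↑(Units.oneSub D hDlt)⁻¹, ?_, ?_⟩
    · simpa using (Units.oneSub D hDlt).mul_inv
    · simpa using (Units.oneSub D hDlt).inv_mul
  obtain ⟨v, hv1, hv2⟩ : ∃ v : X →L[ℝ] X, (1 - E) * v = 1 ∧ v * (1 - E) = 1 := by
    refine ⟨↑(Units.oneSub E hElt)⁻¹, ?_, ?_⟩
    · simpa using (Units.oneSub E hElt).mul_inv
    · simpa using (Units.oneSub E hElt).inv_mul
  set R : X →L[ℝ] X := s * w with hRdef
  have hright : (1 - An n) * R = 1 := by
    rw [hRdef, ← mul_assoc, key1]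
    exact hw1
  have hleft' : (v * s) * (1 - An n) = 1 := by
    rw [mul_assoc, key2]
    exact hv2
  have hLR : (v * s : X →L[ℝ] X) = R := by
    calc (v * s : X →L[ℝ] X) = (v * s) * 1 := (mul_one _).symm
      _ = (v * s) * ((1 - An n) * R) := by rw [hright]
      _ = ((v * s) * (1 - An n)) * R := (mul_assoc _ _ _).symm
      _ = 1 * R := by rw [hleft']
      _ = R := one_mul R
  have hleft : R * (1 - An n) = 1 := by rw [← hLR]; exact hleft'
  -- norm bound on R
  have hinvD : ‖w‖ ≤ 2 := by
    have hw2' : w = 1 + D * w := by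
      have h : w - D * w = 1 := by
        have := hw1; rwa [sub_mul, one_mul] at this
      exact eq_add_of_sub_eq h
    have hn1 : ‖(1 : X →L[ℝ] X)‖ ≤ 1 := ContinuousLinearMap.norm_id_le
    have hbound : ‖w‖ ≤ 1 + 1 / 2 * ‖w‖ := by
      calc ‖w‖ = ‖1 + D * w‖ := by rw [← hw2']
        _ ≤ ‖(1 : X →L[ℝ] X)‖ + ‖D * w‖ := norm_add_le _ _
        _ ≤ 1 + ‖D‖ * ‖w‖ := by
            have := norm_mul_le D w
            linarith
        _ ≤ 1 + 1 / 2 * ‖w‖ := by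
            have h2 : ‖D‖ ≤ 1 / 2 := hDnorm.trans hε₀half
            nlinarith [norm_nonneg w]
    linarith
  have hsnorm : ‖s‖ ≤ ‖B‖ * (1 + M + ‖A‖) := by
    rw [hsdef]
    calc ‖B * (1 + P)‖ ≤ ‖B‖ * ‖1 + P‖ := norm_mul_le _ _
      _ ≤ ‖B‖ * (1 + M + ‖A‖) := by
          apply mul_le_mul_of_nonneg_left _ (norm_nonneg _)
          calc ‖(1 : X →L[ℝ] X) + P‖ ≤ ‖(1 : X →L[ℝ] X)‖ + ‖P‖ := norm_add_le _ _
            _ ≤ 1 + (M + ‖A‖) := by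
                have h1 : ‖(1 : X →L[ℝ] X)‖ ≤ 1 := ContinuousLinearMap.norm_id_le
                have h2 : ‖P‖ ≤ ‖An n‖ + ‖A‖ := by
                  rw [hPdef]; exact norm_sub_le _ _
                have := hM n
                linarith
            _ = 1 + M + ‖A‖ := by ring
  have hRnorm : ‖R‖ ≤ C := by
    rw [hRdef, hCdef]
    calc ‖s * w‖ ≤ ‖s‖ * ‖w‖ := norm_mul_le _ _
      _ ≤ ‖B‖ * (1 + M + ‖A‖) * 2 := by
          apply mul_le_mul hsnorm hinvD (norm_nonneg _)
          positivity
      _ ≤ 2 * ‖B‖ * (1 + M + ‖A‖) + 1 := by nlinarith [norm_nonneg B]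
  -- conclusions
  have hRcomp1 : R.comp (1 - An n) = 1 := by rw [← ContinuousLinearMap.mul_def]; exact hleft
  have hRcomp2 : (1 - An n).comp R = 1 := by rw [← ContinuousLinearMap.mul_def]; exact hright
  have hlinv : Function.LeftInverse R ⇑(1 - An n : X →L[ℝ] X) := by
    intro x
    have : (R.comp (1 - An n)) x = (1 : X →L[ℝ] X) x := by rw [hRcomp1]
    simpa using this
  have hrinv : Function.RightInverse R ⇑(1 - An n : X →L[ℝ] X) := by
    intro x
    have : ((1 - An n : X →L[ℝ] X).comp R) x = (1 : X →L[ℝ] X) x := by rw [hRcomp2]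
    simpa using this
  refine ⟨⟨hlinv.injective, hrinv.surjective⟩, ⟨R, hRcomp1, hRcomp2⟩, ?_⟩
  intro y yn f fn hy hyn
  have hkey : (1 - An n : X →L[ℝ] X) (yn - y) = fn - f + (An n - A) y := by
    have h1 : (1 - An n : X →L[ℝ] X) (yn - y) = (yn - An n yn) - (y - An n y) := by
      simp [ContinuousLinearMap.sub_apply, map_sub]
      all_goals abel
    have h2 : y - An n y = f - (An n - A) y := by
      rw [← hy]
      simp [ContinuousLinearMap.sub_apply]
      all_goals abel
    rw [h1, h2, hyn]
    all_goals abel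
  have hrep : yn - y = R (fn - f + (An n - A) y) := by
    rw [← hkey]
    exact (hlinv (yn - y)).symm
  calc ‖yn - y‖ = ‖R (fn - f + (An n - A) y)‖ := by rw [hrep]
    _ ≤ ‖R‖ * ‖fn - f + (An n - A) y‖ := R.le_opNorm _
    _ ≤ C * (‖(An n - A) y‖ + ‖fn - f‖) := by
        apply mul_le_mul hRnorm _ (norm_nonneg _) hCpos.le
        calc ‖fn - f + (An n - A) y‖ ≤ ‖fn - f‖ + ‖(An n - A) y‖ := norm_add_le _ _
          _ = ‖(An n - A) y‖ + ‖fn - f‖ := by ring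
end
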